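/- Let d ∈ (0, 1/2), A, B > 0, and R a natural number. Let f, g : ℝ → ℝ be integrable with support of f contained in [−A, A] and support of g contained in [−B, B], and suppose ∫_ℝ t^r f(t) dt = 0 for every natural number r < R. Then there exists a constant C > 0 such that for every real α with |α| ≥ 2(A + B), one has |∫_ℝ ∫_ℝ |t − s + α|^{2d−1} f(t) g(s) dt ds| ≤ C · |α|^{2d−1−R}. -/

import Mathlib

open MeasureTheory

open Finset


lemma polyDeriv (R : ℕ) (a : ℕ → ℝ) (t : ℝ) :
    HasDerivAt (fun x => ∑ j ∈ range (R + 1), a j * x ^ j / (Nat.factorial j : ℝ))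
      (∑ j ∈ range R, a (j + 1) * t ^ j / (Nat.factorial j : ℝ)) t := by
  have h : HasDerivAt (fun x => ∑ j ∈ range (R + 1), a j * x ^ j / (Nat.factorial j : ℝ))
      (∑ j ∈ range (R + 1), a j * ((j : ℝ) * t ^ (j - 1)) / (Nat.factorial j : ℝ)) t := by
    apply HasDerivAt.fun_sum
    intro j _
    exact ((hasDerivAt_pow j t).const_mul (a j)).div_const _
  convert h using 1
  rw [Finset.sum_range_succ']
  simp only [Nat.cast_zero, zero_mul, mul_zero, zero_div, add_zero]
  apply Finset.sum_congr rfl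
  intro j _
  rw [Nat.factorial_succ]
  push_cast
  have hj : (j : ℝ) + 1 ≠ 0 := by positivity
  field_simp

lemma myTaylor (A : ℝ) (hA : 0 ≤ A) (M : ℝ) :
    ∀ (R : ℕ) (D : ℕ → ℝ → ℝ),
    (∀ n, Measurable (D n)) →
    (∀ n < R, ∀ t ∈ Set.Icc (-A) A, HasDerivAt (D n) (D (n + 1) t) t) →
    (∀ t ∈ Set.Icc (-A) A, |D R t| ≤ M) →
    ∀ t ∈ Set.Icc (-A) A,
      |D 0 t - ∑ j ∈ range R, D j 0 * t ^ j / (Nat.factorial j : ℝ)| ≤ M * |t| ^ R := by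
  intro R
  induction R with
  | zero =>
    intro D _ _ hM t ht
    simpa using hM t ht
  | succ R ih =>
    intro D hmeas hder hM t ht
    have h0 : (0 : ℝ) ∈ Set.Icc (-A) A := by constructor <;> linarith
    -- v is the derivative of u
    set v : ℝ → ℝ := fun x => D 1 x - ∑ j ∈ range R, D (j + 1) 0 * x ^ j / (Nat.factorial j : ℝ)
      with hv
    have hvbound : ∀ x ∈ Set.Icc (-A) A, |v x| ≤ M * |x| ^ R := by
      apply ih (fun n => D (n + 1))
      · intro n; exact hmeas (n + 1)
      · intro n hn x hx; exact hder (n + 1) (by omega) x hx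
      · intro x hx; exact hM x hx
    set u : ℝ → ℝ := fun x => D 0 x - ∑ j ∈ range (R + 1), D j 0 * x ^ j / (Nat.factorial j : ℝ)
      with hu
    have hu' : ∀ x ∈ Set.Icc (-A) A, HasDerivAt u (v x) x := by
      intro x hx
      exact (hder 0 (by omega) x hx).sub (polyDeriv R (fun j => D j 0) x)
    have hu0 : u 0 = 0 := by
      simp only [hu]
      rw [Finset.sum_range_succ']
      simp
    have hsub : Set.uIcc (0 : ℝ) t ⊆ Set.Icc (-A) A := Set.uIcc_subset_Icc h0 ht
    have hvmeas : Measurable v := by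
      apply (hmeas 1).sub
      apply Finset.measurable_sum
      intro j _
      exact (measurable_id.pow_const j).const_mul (D (j+1) 0) |>.div_const _
    have hvint : IntervalIntegrable v volume 0 t := by
      rw [intervalIntegrable_iff]
      apply Integrable.mono' (g := fun _ => M * |t| ^ R)
        ((integrableOn_const_iff).mpr (Or.inr (by rw [Set.uIoc]; exact measure_Ioc_lt_top)))
        hvmeas.aestronglyMeasurable
      · apply ae_restrict_of_forall_mem measurableSet_uIoc
        intro x hx
        have hx' : x ∈ Set.Icc (-A) A := hsub (Set.uIoc_subset_uIcc hx)
        calc ‖v x‖ = |v x| := rfl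
          _ ≤ M * |x| ^ R := hvbound x hx'
          _ ≤ M * |t| ^ R := by
              have hM0 : 0 ≤ M := le_trans (abs_nonneg _) (hM 0 h0)
              have hxt : |x| ≤ |t| := by
                rcases Set.mem_uIoc.mp hx with ⟨h1, h2⟩ | ⟨h1, h2⟩ <;>
                  { rw [abs_le]; constructor <;>
                    [ (rcases abs_cases t with ⟨he, _⟩ | ⟨he, _⟩ <;> nlinarith);
                      (rcases abs_cases t with ⟨he, _⟩ | ⟨he, _⟩ <;> nlinarith) ] }
              exact mul_le_mul_of_nonneg_left (pow_le_pow_left₀ (abs_nonneg _) hxt R) hM0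
    have hftc : ∫ x in (0:ℝ)..t, v x = u t - u 0 :=
      intervalIntegral.integral_eq_sub_of_hasDerivAt (fun x hx => hu' x (hsub hx)) hvint
    have hbound : |∫ x in (0:ℝ)..t, v x| ≤ M * |t| ^ R * |t - 0| := by
      rw [← Real.norm_eq_abs]
      apply intervalIntegral.norm_integral_le_of_norm_le_const
      intro x hx
      have hx' : x ∈ Set.Icc (-A) A := hsub (Set.uIoc_subset_uIcc hx)
      calc ‖v x‖ = |v x| := rfl
        _ ≤ M * |x| ^ R := hvbound x hx'
        _ ≤ M * |t| ^ R := by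
            have hM0 : 0 ≤ M := le_trans (abs_nonneg _) (hM 0 h0)
            have hxt : |x| ≤ |t| := by
              rcases Set.mem_uIoc.mp hx with ⟨h1, h2⟩ | ⟨h1, h2⟩ <;>
                { rw [abs_le]; constructor <;>
                  [ (rcases abs_cases t with ⟨he, _⟩ | ⟨he, _⟩ <;> nlinarith);
                    (rcases abs_cases t with ⟨he, _⟩ | ⟨he, _⟩ <;> nlinarith) ] }
            exact mul_le_mul_of_nonneg_left (pow_le_pow_left₀ (abs_nonneg _) hxt R) hM0
    have : |u t| ≤ M * |t| ^ (R + 1) := by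
      have : u t = ∫ x in (0:ℝ)..t, v x := by rw [hftc, hu0, sub_zero]
      rw [this]
      calc |∫ x in (0:ℝ)..t, v x| ≤ M * |t| ^ R * |t - 0| := hbound
        _ = M * |t| ^ (R + 1) := by rw [sub_zero, pow_succ]; ring
    exact this

lemma keyLemma (A M : ℝ) (hA : 0 < A) (R : ℕ) (D : ℕ → ℝ → ℝ)
    (hmeas : ∀ n, Measurable (D n))
    (hder : ∀ n < R, ∀ t ∈ Set.Icc (-A) A, HasDerivAt (D n) (D (n + 1) t) t)
    (hM : ∀ t ∈ Set.Icc (-A) A, |D R t| ≤ M)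
    (f : ℝ → ℝ) (hf : Integrable f) (hfs : Function.support f ⊆ Set.Icc (-A) A)
    (hmf : ∀ r : ℕ, r < R → ∫ t : ℝ, t ^ r * f t = 0) :
    |∫ t : ℝ, D 0 t * f t| ≤ M * A ^ R * ∫ t : ℝ, |f t| := by
  have h0 : (0 : ℝ) ∈ Set.Icc (-A) A := by constructor <;> linarith
  set P : ℝ → ℝ := fun t => ∑ j ∈ range R, D j 0 * t ^ j / (Nat.factorial j : ℝ) with hP
  have htay := myTaylor A hA.le M R D hmeas hder hM
  -- pointwise bound on the support
  have hpt : ∀ t, |(D 0 t - P t) * f t| ≤ M * A ^ R * |f t| := by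
    intro t
    by_cases hft : f t = 0
    · simp [hft]
    · have ht : t ∈ Set.Icc (-A) A := hfs hft
      rw [abs_mul]
      apply mul_le_mul_of_nonneg_right _ (abs_nonneg _) |>.trans_eq rfl
      calc |D 0 t - P t| ≤ M * |t| ^ R := htay t ht
        _ ≤ M * A ^ R := by
            have hM0 : 0 ≤ M := le_trans (abs_nonneg _) (hM 0 h0)
            have : |t| ≤ A := abs_le.mpr ⟨ht.1, ht.2⟩
            exact mul_le_mul_of_nonneg_left (pow_le_pow_left₀ (abs_nonneg _) this R) hM0
  have hM0 : 0 ≤ M := le_trans (abs_nonneg _) (hM 0 h0)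
  -- integrability of the pieces
  have hPm : Measurable P := by
    apply Finset.measurable_sum
    intro j _
    exact (measurable_id.pow_const j).const_mul (D j 0) |>.div_const _
  have hint1 : Integrable (fun t => (D 0 t - P t) * f t) := by
    apply Integrable.mono' (hf.abs.const_mul (M * A ^ R))
      (((hmeas 0).sub hPm).aestronglyMeasurable.mul hf.aestronglyMeasurable)
    exact Filter.Eventually.of_forall hpt
  have hintmon : ∀ r : ℕ, Integrable (fun t => t ^ r * f t) := by
    intro r
    apply Integrable.mono' (f := fun t => t ^ r * f t) (hf.abs.const_mul (A ^ r))
      (((measurable_id.pow_const r).aemeasurable.mul hf.aemeasurable).aestronglyMeasurable)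
    apply Filter.Eventually.of_forall
    intro t
    by_cases hft : f t = 0
    · simp [hft]
    · have ht : t ∈ Set.Icc (-A) A := hfs hft
      have : |t| ≤ A := abs_le.mpr ⟨ht.1, ht.2⟩
      rw [Real.norm_eq_abs, abs_mul, abs_pow]
      exact mul_le_mul_of_nonneg_right (pow_le_pow_left₀ (abs_nonneg _) this r) (abs_nonneg _)
  have hint2 : Integrable (fun t => P t * f t) := by
    have : (fun t => P t * f t)
        = fun t => ∑ j ∈ range R, (D j 0 / (Nat.factorial j : ℝ)) * (t ^ j * f t) := by
      funext t
      rw [Finset.sum_mul]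
      apply Finset.sum_congr rfl
      intro j _
      ring
    rw [this]
    apply integrable_finset_sum
    intro j _
    exact (hintmon j).const_mul _
  -- ∫ P f = 0
  have hPint : ∫ t : ℝ, P t * f t = 0 := by
    have : (fun t => P t * f t)
        = fun t => ∑ j ∈ range R, (D j 0 / (Nat.factorial j : ℝ)) * (t ^ j * f t) := by
      funext t
      rw [Finset.sum_mul]
      apply Finset.sum_congr rfl
      intro j _
      ring
    rw [this, integral_finset_sum]
    · apply Finset.sum_eq_zero
      intro j hj
      rw [integral_const_mul, hmf j (Finset.mem_range.mp hj), mul_zero]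
    · intro j _
      exact (hintmon j).const_mul _
  have hsplit : ∫ t : ℝ, D 0 t * f t = ∫ t : ℝ, (D 0 t - P t) * f t := by
    have : (fun t => D 0 t * f t) = fun t => (D 0 t - P t) * f t + P t * f t := by
      funext t; ring
    rw [this, integral_add hint1 hint2, hPint, add_zero]
  rw [hsplit]
  calc |∫ t : ℝ, (D 0 t - P t) * f t| ≤ ∫ t : ℝ, |(D 0 t - P t) * f t| := by
        have := norm_integral_le_integral_norm (μ := volume) (fun t => (D 0 t - P t) * f t)
        simp only [Real.norm_eq_abs] at this
        exact this
    _ ≤ ∫ t : ℝ, M * A ^ R * |f t| := by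
        apply integral_mono_of_nonneg (Filter.Eventually.of_forall fun t => abs_nonneg _)
          (hf.abs.const_mul _) (Filter.Eventually.of_forall hpt)
    _ = M * A ^ R * ∫ t : ℝ, |f t| := integral_const_mul _ _

lemma measRpowConst (q : ℝ) : Measurable fun y : ℝ => y ^ q := by measurability


lemma posCase (d : ℝ) (hd : d ∈ Set.Ioo (0 : ℝ) (1 / 2)) (A B : ℝ)
    (hA : 0 < A) (hB : 0 < B) (R : ℕ)
    (f g : ℝ → ℝ) (hf : Integrable f) (hg : Integrable g)
    (hfs : Function.support f ⊆ Set.Icc (-A) A)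
    (hgs : Function.support g ⊆ Set.Icc (-B) B)
    (hmf : ∀ r : ℕ, r < R → ∫ t : ℝ, t ^ r * f t = 0) :
    ∃ C : ℝ, 0 < C ∧ ∀ α : ℝ, 2 * (A + B) ≤ α →
      |∫ t : ℝ, ∫ s : ℝ, |t - s + α| ^ (2 * d - 1) * f t * g s| ≤
        C * α ^ (2 * d - 1 - R) := by
  obtain ⟨hd0, hd12⟩ := hd
  set p : ℝ := 2 * d - 1 with hp
  have hp0 : p < 0 := by simp only [hp]; linarith
  have hpR : p - (R : ℝ) ≤ 0 := by
    have : (0:ℝ) ≤ R := Nat.cast_nonneg R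
    linarith
  set P : ℝ := ∏ k ∈ range R, |p - (k : ℝ)| with hPdef
  have hPnn : 0 ≤ P := Finset.prod_nonneg fun _ _ => abs_nonneg _
  set C₀ : ℝ := P * 2 ^ ((R : ℝ) - p) * A ^ R * (∫ t : ℝ, |f t|) * (∫ s : ℝ, |g s|) with hC₀
  have hfabs : 0 ≤ ∫ t : ℝ, |f t| := integral_nonneg fun t => abs_nonneg _
  have hgabs : 0 ≤ ∫ s : ℝ, |g s| := integral_nonneg fun s => abs_nonneg _
  have hC₀nn : 0 ≤ C₀ := by
    apply mul_nonneg (mul_nonneg (mul_nonneg (mul_nonneg hPnn _) _) hfabs) hgabs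
    · exact le_of_lt (Real.rpow_pos_of_pos (by norm_num) _)
    · positivity
  refine ⟨C₀ + 1, by linarith, fun α hα => ?_⟩
  have hα0 : 0 < α := lt_of_lt_of_le (by positivity) hα
  set Mα : ℝ := P * (α / 2) ^ (p - (R : ℝ)) with hMα
  have hMαnn : 0 ≤ Mα := mul_nonneg hPnn (le_of_lt (Real.rpow_pos_of_pos (by positivity) _))
  -- Step A : inner bound
  have stepA : ∀ s : ℝ, |∫ t : ℝ, |t - s + α| ^ p * f t * g s| ≤
      (Mα * A ^ R * ∫ t : ℝ, |f t|) * |g s| := by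
    intro s
    have hmulr : (∫ t : ℝ, |t - s + α| ^ p * f t * g s)
        = (∫ t : ℝ, |t - s + α| ^ p * f t) * g s := integral_mul_const _ _
    by_cases hgs0 : g s = 0
    · simp [hmulr, hgs0]
    · have hsB : s ∈ Set.Icc (-B) B := hgs hgs0
      set c₀ : ℝ := α - s with hc₀
      have hkey0 : ∀ t ∈ Set.Icc (-A) A, α / 2 ≤ t + c₀ := by
        intro t ht
        have := ht.1
        have := hsB.2
        simp only [hc₀]
        linarith
      set D : ℕ → ℝ → ℝ := fun n t =>
        (∏ k ∈ range n, (p - (k : ℝ))) * (t + c₀) ^ (p - (n : ℝ)) with hD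
      have hmeasD : ∀ n, Measurable (D n) := by
        intro n
        exact ((measRpowConst (p - (n : ℝ))).comp (measurable_id.add_const c₀)).const_mul _
      have hderD : ∀ n < R, ∀ t ∈ Set.Icc (-A) A, HasDerivAt (D n) (D (n + 1) t) t := by
        intro n _ t ht
        have hpos : 0 < t + c₀ := lt_of_lt_of_le (by positivity) (hkey0 t ht)
        have h1 : HasDerivAt (fun x : ℝ => x + c₀) 1 t := (hasDerivAt_id t).add_const c₀
        have h2 := h1.rpow_const (p := p - (n : ℝ)) (Or.inl (ne_of_gt hpos))
        have h3 := h2.const_mul (∏ k ∈ range n, (p - (k : ℝ)))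
        refine h3.congr_deriv ?_
        rw [hD]
        simp only
        rw [Finset.prod_range_succ]
        have he : p - ((n + 1 : ℕ) : ℝ) = p - (n : ℝ) - 1 := by push_cast; ring
        rw [he]
        ring
      have hMD : ∀ t ∈ Set.Icc (-A) A, |D R t| ≤ Mα := by
        intro t ht
        have hpos : 0 < t + c₀ := lt_of_lt_of_le (by positivity) (hkey0 t ht)
        have h1 : |D R t| = P * (t + c₀) ^ (p - (R : ℝ)) := by
          rw [hD]
          simp only
          rw [abs_mul, Finset.abs_prod,
            abs_of_nonneg (Real.rpow_nonneg hpos.le _)]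
        rw [h1, hMα]
        apply mul_le_mul_of_nonneg_left _ hPnn
        exact Real.rpow_le_rpow_of_nonpos (by positivity) (hkey0 t ht) hpR
      have hinner : (∫ t : ℝ, |t - s + α| ^ p * f t) = ∫ t : ℝ, D 0 t * f t := by
        congr 1
        funext t
        by_cases hft : f t = 0
        · simp [hft]
        · have ht : t ∈ Set.Icc (-A) A := hfs hft
          have hpos : 0 < t + c₀ := lt_of_lt_of_le (by positivity) (hkey0 t ht)
          have : |t - s + α| = t + c₀ := by
            rw [abs_of_pos (by simp only [hc₀] at hpos ⊢; linarith)]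
            simp only [hc₀]; ring
          rw [this, hD]
          simp
      have hkeyres := keyLemma A Mα hA R D hmeasD hderD hMD f hf hfs hmf
      rw [hmulr, abs_mul, hinner]
      exact mul_le_mul_of_nonneg_right hkeyres (abs_nonneg _)
  -- Step B : Fubini and conclusion
  set M₀ : ℝ := (A + B) ^ p with hM₀
  have hprod : Integrable (Function.uncurry fun t s : ℝ => |t - s + α| ^ p * f t * g s)
      (volume.prod volume) := by
    have heq : (Function.uncurry fun t s : ℝ => |t - s + α| ^ p * f t * g s)
        = fun z : ℝ × ℝ => |z.1 - z.2 + α| ^ p * (f z.1 * g z.2) := by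
      funext z
      simp [Function.uncurry, mul_assoc]
    rw [heq]
    have hrp : Measurable fun y : ℝ => y ^ p := measRpowConst p
    have hKmeas : Measurable fun z : ℝ × ℝ => |z.1 - z.2 + α| ^ p :=
      hrp.comp ((measurable_fst.sub measurable_snd).add_const α).abs
    have hfg : Integrable (fun z : ℝ × ℝ => f z.1 * g z.2) (volume.prod volume) :=
      hf.mul_prod hg
    have hfgabs : Integrable (fun z : ℝ × ℝ => |f z.1| * |g z.2|) (volume.prod volume) :=
      hf.abs.mul_prod hg.abs
    apply Integrable.mono' (hfgabs.const_mul M₀)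
      (hKmeas.aestronglyMeasurable.mul hfg.aestronglyMeasurable)
    apply Filter.Eventually.of_forall
    rintro ⟨t, s⟩
    simp only [Real.norm_eq_abs, Pi.mul_apply]
    have hM₀nn : 0 ≤ M₀ := Real.rpow_nonneg (by positivity) _
    by_cases hfg0 : f t * g s = 0
    · rw [hfg0, mul_zero, abs_zero]
      positivity
    · have hft : f t ≠ 0 := fun h => hfg0 (by rw [h, zero_mul])
      have hgs0 : g s ≠ 0 := fun h => hfg0 (by rw [h, mul_zero])
      have ht : t ∈ Set.Icc (-A) A := hfs hft
      have hs : s ∈ Set.Icc (-B) B := hgs hgs0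
      have hlow : A + B ≤ |t - s + α| := by
        rw [abs_of_pos (by nlinarith [ht.1, hs.2] : (0:ℝ) < t - s + α)]
        nlinarith [ht.1, hs.2]
      have hK : |t - s + α| ^ p ≤ M₀ :=
        Real.rpow_le_rpow_of_nonpos (by positivity) hlow hp0.le
      have hKnn : 0 ≤ |t - s + α| ^ p := Real.rpow_nonneg (abs_nonneg _) _
      rw [abs_mul, abs_of_nonneg hKnn, abs_mul]
      exact mul_le_mul_of_nonneg_right hK (by positivity)
  have hswap : (∫ t : ℝ, ∫ s : ℝ, |t - s + α| ^ p * f t * g s)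
      = ∫ s : ℝ, ∫ t : ℝ, |t - s + α| ^ p * f t * g s :=
    integral_integral_swap hprod
  rw [hswap]
  have hIbound := stepA
  calc |∫ s : ℝ, ∫ t : ℝ, |t - s + α| ^ p * f t * g s|
      ≤ ∫ s : ℝ, |∫ t : ℝ, |t - s + α| ^ p * f t * g s| := by
        have := norm_integral_le_integral_norm (μ := volume)
          (fun s => ∫ t : ℝ, |t - s + α| ^ p * f t * g s)
        simpa only [Real.norm_eq_abs] using this
    _ ≤ ∫ s : ℝ, (Mα * A ^ R * ∫ t : ℝ, |f t|) * |g s| := by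
        apply integral_mono_of_nonneg (Filter.Eventually.of_forall fun s => abs_nonneg _)
          ((hg.abs.const_mul _)) (Filter.Eventually.of_forall hIbound)
    _ = (Mα * A ^ R * ∫ t : ℝ, |f t|) * ∫ s : ℝ, |g s| := integral_const_mul _ _
    _ ≤ (C₀ + 1) * α ^ (2 * d - 1 - (R : ℝ)) := by
        have harexp : (α / 2) ^ (p - (R : ℝ)) = α ^ (p - (R : ℝ)) * 2 ^ ((R : ℝ) - p) := by
          rw [Real.div_rpow hα0.le (by norm_num : (0:ℝ) ≤ 2), div_eq_mul_inv,
            ← Real.rpow_neg (by norm_num : (0:ℝ) ≤ 2)]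
          ring_nf
        have hexp : 2 * d - 1 - (R : ℝ) = p - (R : ℝ) := by rw [hp]
        rw [hexp]
        have hrnn : 0 ≤ α ^ (p - (R : ℝ)) := Real.rpow_nonneg hα0.le _
        have hfinal : Mα * A ^ R * (∫ t : ℝ, |f t|) * ∫ s : ℝ, |g s|
            = C₀ * α ^ (p - (R : ℝ)) := by
          rw [hMα, harexp, hC₀]
          ring
        rw [hfinal]
        nlinarith [hrnn]


/-- case 2 of Theorem 1, double-integral form: covariance decay
`O(|α|^{2d-1-R})` when one of the two functions has `R` vanishing moments. -/
theorem stmt_17 (d : ℝ) (hd : d ∈ Set.Ioo (0 : ℝ) (1 / 2)) (A B : ℝ)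
    (hA : 0 < A) (hB : 0 < B) (R : ℕ)
    (f g : ℝ → ℝ) (hf : Integrable f) (hg : Integrable g)
    (hfs : Function.support f ⊆ Set.Icc (-A) A)
    (hgs : Function.support g ⊆ Set.Icc (-B) B)
    (hmf : ∀ r : ℕ, r < R → ∫ t : ℝ, t ^ r * f t = 0) :
    ∃ C : ℝ, 0 < C ∧ ∀ α : ℝ, 2 * (A + B) ≤ |α| →
      |∫ t : ℝ, ∫ s : ℝ, |t - s + α| ^ (2 * d - 1) * f t * g s| ≤
        C * |α| ^ (2 * d - 1 - R) := by
  obtain ⟨C₁, hC₁, H₁⟩ := posCase d hd A B hA hB R f g hf hg hfs hgs hmf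
  set f' : ℝ → ℝ := fun t => f (-t) with hf'def
  set g' : ℝ → ℝ := fun s => g (-s) with hg'def
  have hf' : Integrable f' :=
    ((Measure.measurePreserving_neg volume).integrable_comp hf.aestronglyMeasurable).mpr hf
  have hg' : Integrable g' :=
    ((Measure.measurePreserving_neg volume).integrable_comp hg.aestronglyMeasurable).mpr hg
  have hfs' : Function.support f' ⊆ Set.Icc (-A) A := by
    intro t ht
    have := hfs (Function.mem_support.mpr ht)
    constructor
    · linarith [this.2]
    · linarith [this.1]
  have hgs' : Function.support g' ⊆ Set.Icc (-B) B := by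
    intro s hs
    have := hgs (Function.mem_support.mpr hs)
    constructor
    · linarith [this.2]
    · linarith [this.1]
  have hmf' : ∀ r : ℕ, r < R → ∫ t : ℝ, t ^ r * f' t = 0 := by
    intro r hr
    have h1 := integral_neg_eq_self (fun t => (-t) ^ r * f t) volume
    simp only [neg_neg] at h1
    -- h1 : ∫ t, t ^ r * f (-t) = ∫ t, (-t) ^ r * f t
    rw [hf'def]
    simp only
    rw [h1]
    have h2 : (fun t : ℝ => (-t) ^ r * f t) = fun t : ℝ => (-1 : ℝ) ^ r * (t ^ r * f t) := by
      funext t; rw [neg_pow]; ring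
    rw [h2, integral_const_mul, hmf r hr, mul_zero]
  obtain ⟨C₂, hC₂, H₂⟩ := posCase d hd A B hA hB R f' g' hf' hg' hfs' hgs' hmf'
  refine ⟨C₁ + C₂, by positivity, fun α hα => ?_⟩
  rcases le_or_gt 0 α with hpos | hneg
  · rw [abs_of_nonneg hpos] at hα ⊢
    exact (H₁ α hα).trans
      (mul_le_mul_of_nonneg_right (by linarith) (Real.rpow_nonneg hpos _))
  · rw [abs_of_neg hneg] at hα ⊢
    set H : ℝ → ℝ := fun t' => ∫ s : ℝ, |t' - s + (-α)| ^ (2 * d - 1) * f' t' * g' s with hH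
    have inner_eq : ∀ t : ℝ, (∫ s : ℝ, |t - s + α| ^ (2 * d - 1) * f t * g s) = H (-t) := by
      intro t
      rw [hH]
      simp only [hf'def, hg'def, neg_neg]
      rw [← integral_neg_eq_self
        (fun s : ℝ => |(-t) - s + (-α)| ^ (2 * d - 1) * f t * g (-s)) volume]
      congr 1
      funext s
      rw [neg_neg]
      congr 2
      rw [show (-t) - (-s) + (-α) = -(t - s + α) by ring, abs_neg]
    have outer_eq : (∫ t : ℝ, ∫ s : ℝ, |t - s + α| ^ (2 * d - 1) * f t * g s)
        = ∫ t' : ℝ, H t' := by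
      rw [← integral_neg_eq_self H volume]
      congr 1
      funext t
      exact inner_eq t
    rw [outer_eq]
    exact (H₂ (-α) hα).trans
      (mul_le_mul_of_nonneg_right (by linarith) (Real.rpow_nonneg (by linarith) _))
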